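/- Let μ > 0 and let f be a classical solution of the BDY PDE on [0,∞) × [0,∞) with ∫₀^∞ f(v,t) dv = 1 and ∫₀^∞ v f(v,t) dv = μ for all t ≥ 0, such that v³ f(v,t), v³ ∂_v f(v,t), v² f(v,t) → 0 as v → ∞ and v ↦ v³ f(v,t), v³ ∂_vv f(v,t), v² f(v,t) are integrable for each t. Then d/dt ∫₀^∞ v³ f(v,t) dv = 6 μ − 3 f(0,t) ∫₀^∞ v² f(v,t) dv for all t ≥ 0. -/

import Mathlib

open MeasureTheory Set Filter

lemma cube_deriv_integrable
    (g g' g'' : ℝ → ℝ)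
    (hg' : ∀ u : ℝ, 0 ≤ u → HasDerivAt g (g' u) u)
    (hg'' : ∀ u : ℝ, 0 ≤ u → HasDerivAt g' (g'' u) u)
    (hint_g'' : IntegrableOn g'' (Ioi (0:ℝ)))
    (hint_v3g'' : IntegrableOn (fun v => v ^ 3 * g'' v) (Ioi (0:ℝ)))
    (hint_v3g : IntegrableOn (fun v => v ^ 3 * g v) (Ioi (0:ℝ)))
    (hint_g' : IntegrableOn g' (Ioi (0:ℝ))) :
    IntegrableOn (fun v => v ^ 3 * g' v) (Ioi (0:ℝ)) := by
  -- a measurable nonnegative representative of `u ↦ u ^ 3 * |g'' u|` on `Ioi 0`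
  obtain ⟨ψ, hψmeas, hψae⟩ : ∃ ψ : ℝ → ℝ, StronglyMeasurable ψ ∧
      (fun u => u ^ 3 * g'' u) =ᵐ[volume.restrict (Ioi (0:ℝ))] ψ :=
    ⟨hint_v3g''.aestronglyMeasurable.mk _,
      hint_v3g''.aestronglyMeasurable.stronglyMeasurable_mk,
      hint_v3g''.aestronglyMeasurable.ae_eq_mk⟩
  set χ : ℝ → ℝ := fun u => |ψ u| with hχdef
  have hχmeas : Measurable χ := hψmeas.measurable.abs
  have hχnonneg : ∀ u, 0 ≤ χ u := fun u => abs_nonneg _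
  have hχae : (fun u => |u ^ 3 * g'' u|) =ᵐ[volume.restrict (Ioi (0:ℝ))] χ :=
    hψae.mono fun u hu => by rw [hχdef]; exact congrArg abs hu
  have hχint : IntegrableOn χ (Ioi (0:ℝ)) := hint_v3g''.abs.congr hχae
  -- the primitive of χ
  set Φ : ℝ → ℝ := fun x => ∫ u in Ioc (0:ℝ) x, χ u with hΦdef
  have hΦmono : Monotone Φ := by
    intro x y hxy
    exact setIntegral_mono_set (hχint.mono_set Ioc_subset_Ioi_self)
      (ae_of_all _ hχnonneg) ((Ioc_subset_Ioc_right hxy).eventuallyLE)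
  set H : ℝ → ℝ := fun v => Φ (v + 1) - Φ v with hHdef
  have hHeq : ∀ v : ℝ, 0 ≤ v → H v = ∫ u in Ioc v (v + 1), χ u := by
    intro v hv
    have hsub : Ioc v (v + 1) ⊆ Ioi (0:ℝ) := fun u hu => lt_of_le_of_lt hv hu.1
    have h1 : Ioc (0:ℝ) v ∪ Ioc v (v + 1) = Ioc 0 (v + 1) :=
      Ioc_union_Ioc_eq_Ioc hv (by linarith)
    have h2 : Φ (v + 1) = Φ v + ∫ u in Ioc v (v + 1), χ u := by
      rw [hΦdef]
      simp only [← h1]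
      rw [setIntegral_union (Ioc_disjoint_Ioc_of_le le_rfl) measurableSet_Ioc
        (hχint.mono_set Ioc_subset_Ioi_self) (hχint.mono_set hsub)]
    rw [hHdef]; simp only [h2]; ring
  have hHnonneg : ∀ v, 0 ≤ H v := fun v => sub_nonneg.2 (hΦmono (by linarith))
  have hHmeas : Measurable H :=
    (hΦmono.measurable.comp (measurable_add_const 1)).sub hΦmono.measurable
  set ec : ℝ → ENNReal := fun u => ENNReal.ofReal (χ u) with hecdef
  have hecmeas : Measurable ec := hχmeas.ennreal_ofReal
  have hHint : IntegrableOn H (Ioi (0:ℝ)) := by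
    refine ⟨hHmeas.aestronglyMeasurable, ?_⟩
    rw [hasFiniteIntegral_iff_norm]
    have e1 : ∀ᵐ v ∂(volume.restrict (Ioi (0:ℝ))),
        ENNReal.ofReal ‖H v‖ = ∫⁻ u, (Ioc v (v + 1)).indicator ec u := by
      refine (ae_restrict_mem measurableSet_Ioi).mono fun v hv => ?_
      have hv0 : (0:ℝ) ≤ v := le_of_lt hv
      have hsub : Ioc v (v + 1) ⊆ Ioi (0:ℝ) := fun u hu => lt_of_le_of_lt hv0 hu.1
      rw [Real.norm_eq_abs, abs_of_nonneg (hHnonneg v), hHeq v hv0,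
        ofReal_integral_eq_lintegral_ofReal (hχint.mono_set hsub)
          (ae_of_all _ hχnonneg),
        ← lintegral_indicator measurableSet_Ioc]
    rw [lintegral_congr_ae e1]
    have hFmeas : Measurable
        (Function.uncurry fun v u => (Ioc v (v + 1)).indicator ec u) := by
      have hset : MeasurableSet {p : ℝ × ℝ | p.1 < p.2 ∧ p.2 ≤ p.1 + 1} :=
        (measurableSet_lt measurable_fst measurable_snd).inter
          (measurableSet_le measurable_snd (measurable_fst.add_const 1))
      have heq : (Function.uncurry fun v u => (Ioc v (v + 1)).indicator ec u)
          = ({p : ℝ × ℝ | p.1 < p.2 ∧ p.2 ≤ p.1 + 1}).indicator (fun p => ec p.2) := by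
        ext p
        simp [Function.uncurry, Set.indicator_apply, Set.mem_Ioc, Set.mem_setOf_eq]
      rw [heq]
      exact (hecmeas.comp measurable_snd).indicator hset
    rw [lintegral_lintegral_swap hFmeas.aemeasurable]
    have hbound : ∀ u : ℝ,
        (∫⁻ v in Ioi (0:ℝ), (Ioc v (v + 1)).indicator ec u)
          ≤ (Ioi (0:ℝ)).indicator ec u := by
      intro u
      have hswap : (fun v => (Ioc v (v + 1)).indicator ec u)
          = (Ico (u - 1) u).indicator (fun _ => ec u) := by
        ext v
        by_cases h : v ∈ Ico (u - 1) u
        · rw [indicator_of_mem h]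
          exact indicator_of_mem (by constructor <;> [exact h.2; linarith [h.1]]) _
        · rw [indicator_of_notMem h]
          refine indicator_of_notMem (fun hc => h ?_) _
          exact ⟨by linarith [hc.2], hc.1⟩
      rw [hswap, lintegral_indicator_const measurableSet_Ico,
        Measure.restrict_apply measurableSet_Ico]
      by_cases hu : 0 < u
      · rw [indicator_of_mem (mem_Ioi.2 hu)]
        calc ec u * volume (Ico (u - 1) u ∩ Ioi 0)
            ≤ ec u * volume (Ico (u - 1) u) := by
              gcongr; exact inter_subset_left
          _ = ec u * 1 := by rw [Real.volume_Ico]; norm_num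
          _ = ec u := mul_one _
      · have : Ico (u - 1) u ∩ Ioi (0:ℝ) = ∅ := by
          ext x; simp only [mem_inter_iff, mem_Ico, mem_Ioi, mem_empty_iff_false,
            iff_false, not_and]
          intro hx; linarith [hx.2, not_lt.1 hu]
        rw [this, indicator_of_notMem (fun hc => hu (mem_Ioi.1 hc))]
        simp
    calc (∫⁻ u, ∫⁻ v in Ioi (0:ℝ), (Ioc v (v + 1)).indicator ec u)
        ≤ ∫⁻ u, (Ioi (0:ℝ)).indicator ec u := lintegral_mono hbound
      _ = ∫⁻ u in Ioi (0:ℝ), ec u := lintegral_indicator measurableSet_Ioi _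
      _ < ⊤ := by
          have := hχint.2
          rw [hasFiniteIntegral_iff_norm] at this
          refine lt_of_le_of_lt (lintegral_mono fun u => ?_) this
          rw [hecdef]
          exact ENNReal.ofReal_le_ofReal (le_abs_self _)
  -- boundedness of the translated cube moment
  set B : ℝ → ℝ := (Ioi (1:ℝ)).indicator (fun x => |x ^ 3 * g x|) with hBdef
  have hBint : Integrable B volume := by
    rw [hBdef, integrable_indicator_iff measurableSet_Ioi]
    exact (hint_v3g.mono_set fun x hx => mem_Ioi.2 (lt_trans (one_pos : (0:ℝ) < 1) hx)).abs
  have hBshift : IntegrableOn (fun v => B (v + 1)) (Ioi (0:ℝ)) :=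
    (hBint.comp_add_right 1).integrableOn
  -- the dominating function
  set bnd : ℝ → ℝ := fun v => B (v + 1) + |v ^ 3 * g v| + H v with hbnddef
  have hbndint : IntegrableOn bnd (Ioi (0:ℝ)) :=
    (hBshift.add hint_v3g.abs).add hHint
  -- measurability of the target
  refine Integrable.mono' hbndint
    ((measurable_id.pow_const 3).aestronglyMeasurable.mul hint_g'.aestronglyMeasurable) ?_
  refine (ae_restrict_iff' measurableSet_Ioi).2 ?_
  refine ae_of_all _ fun v hv => ?_
  have hv0 : (0:ℝ) < v := hv
  have hle : v ≤ v + 1 := by linarith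
  have hsub : Ioc v (v + 1) ⊆ Ioi (0:ℝ) := fun u hu => lt_trans hv0 hu.1
  have hb : IntegrableOn g'' (Ioc v (v + 1)) := hint_g''.mono_set hsub
  have hii' : IntegrableOn (fun u => (v + 1 - u) * g'' u) (Ioc v (v + 1)) := by
    refine Integrable.mono' hb.abs
      ((continuous_const.sub continuous_id).aestronglyMeasurable.mul
        hb.aestronglyMeasurable) ?_
    refine (ae_restrict_iff' measurableSet_Ioc).2 (ae_of_all _ fun u hu => ?_)
    have h1 : |v + 1 - u| ≤ 1 := by
      rw [abs_le]; constructor <;> [linarith [hu.1.le, hu.2]; linarith [hu.1.le, hu.2]]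
    calc ‖(v + 1 - u) * g'' u‖ = |v + 1 - u| * |g'' u| := abs_mul _ _
      _ ≤ 1 * |g'' u| := mul_le_mul_of_nonneg_right h1 (abs_nonneg _)
      _ = |g'' u| := one_mul _
  have hii : IntervalIntegrable (fun u => (v + 1 - u) * g'' u) volume v (v + 1) := by
    rw [intervalIntegrable_iff_integrableOn_Ioc_of_le hle]; exact hii'
  have key : (∫ u in v..(v + 1), (v + 1 - u) * g'' u)
      = (g (v + 1) + (v + 1 - (v + 1)) * g' (v + 1)) - (g v + (v + 1 - v) * g' v) := by
    apply intervalIntegral.integral_eq_sub_of_hasDerivAt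
      (f := fun u => g u + (v + 1 - u) * g' u) _ hii
    intro u hu
    rw [uIcc_of_le hle] at hu
    have hu0 : (0:ℝ) ≤ u := le_trans hv0.le hu.1
    have h1 : HasDerivAt (fun u : ℝ => (v + 1 - u) * g' u)
        (-1 * g' u + (v + 1 - u) * g'' u) u :=
      (((hasDerivAt_id u).const_sub (v + 1))).mul (hg'' u hu0)
    have h2 := (hg' u hu0).add h1
    exact h2.congr_deriv (by ring)
  have hgval : g' v = g (v + 1) - g v - ∫ u in v..(v + 1), (v + 1 - u) * g'' u := by
    rw [key]; ring
  set I : ℝ := ∫ u in v..(v + 1), (v + 1 - u) * g'' u with hIdef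
  have hrem : v ^ 3 * |I| ≤ H v := by
    have h1 : |I| ≤ ∫ u in v..(v + 1), |(v + 1 - u) * g'' u| :=
      intervalIntegral.abs_integral_le_integral_abs hle
    have h2 : (∫ u in v..(v + 1), |(v + 1 - u) * g'' u|)
        = ∫ u in Ioc v (v + 1), |(v + 1 - u) * g'' u| :=
      intervalIntegral.integral_of_le hle
    have hχae' : ∀ᵐ u ∂(volume.restrict (Ioc v (v + 1))), |u ^ 3 * g'' u| = χ u :=
      ae_restrict_of_ae_restrict_of_subset hsub hχae
    have h3 : (∫ u in Ioc v (v + 1), v ^ 3 * |(v + 1 - u) * g'' u|)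
        ≤ ∫ u in Ioc v (v + 1), χ u := by
      refine integral_mono_ae (hii'.abs.const_mul _) (hχint.mono_set hsub) ?_
      filter_upwards [ae_restrict_mem measurableSet_Ioc, hχae'] with u hu hueq
      have h4 : |v + 1 - u| ≤ 1 := by
        rw [abs_le]; constructor <;> [linarith [hu.1.le, hu.2]; linarith [hu.1.le, hu.2]]
      calc v ^ 3 * |(v + 1 - u) * g'' u|
          = v ^ 3 * (|v + 1 - u| * |g'' u|) := by rw [abs_mul]
        _ ≤ v ^ 3 * (1 * |g'' u|) := by
            refine mul_le_mul_of_nonneg_left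
              (mul_le_mul_of_nonneg_right h4 (abs_nonneg _)) (by positivity)
        _ = v ^ 3 * |g'' u| := by ring
        _ ≤ u ^ 3 * |g'' u| :=
            mul_le_mul_of_nonneg_right (pow_le_pow_left₀ hv0.le hu.1.le 3) (abs_nonneg _)
        _ = |u ^ 3 * g'' u| := by
            rw [abs_mul, abs_of_nonneg (pow_nonneg (le_trans hv0.le hu.1.le) 3)]
        _ = χ u := hueq
    calc v ^ 3 * |I|
        ≤ v ^ 3 * ∫ u in Ioc v (v + 1), |(v + 1 - u) * g'' u| :=
          mul_le_mul_of_nonneg_left (h1.trans_eq h2) (by positivity)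
      _ = ∫ u in Ioc v (v + 1), v ^ 3 * |(v + 1 - u) * g'' u| :=
          (integral_const_mul _ _).symm
      _ ≤ ∫ u in Ioc v (v + 1), χ u := h3
      _ = H v := (hHeq v hv0.le).symm
  have hB : v ^ 3 * |g (v + 1)| ≤ B (v + 1) := by
    rw [hBdef, indicator_of_mem (show v + 1 ∈ Ioi (1:ℝ) from by
      rw [mem_Ioi]; linarith)]
    rw [abs_mul, abs_of_nonneg (show (0:ℝ) ≤ (v + 1) ^ 3 by positivity)]
    exact mul_le_mul_of_nonneg_right (pow_le_pow_left₀ hv0.le (by linarith) 3) (abs_nonneg _)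
  have hnorm : ‖v ^ 3 * g' v‖ = v ^ 3 * |g' v| := by
    rw [Real.norm_eq_abs, abs_mul, abs_of_nonneg (pow_nonneg hv0.le 3)]
  rw [hnorm, hgval, hbnddef]
  have habs : |g (v + 1) - g v - I| ≤ |g (v + 1)| + |g v| + |I| :=
    (abs_sub _ _).trans (add_le_add (abs_sub _ _) le_rfl)
  calc v ^ 3 * |g (v + 1) - g v - I|
      ≤ v ^ 3 * (|g (v + 1)| + |g v| + |I|) :=
        mul_le_mul_of_nonneg_left habs (by positivity)
    _ = v ^ 3 * |g (v + 1)| + v ^ 3 * |g v| + v ^ 3 * |I| := by ring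
    _ ≤ B (v + 1) + |v ^ 3 * g v| + H v := by
        have h5 : v ^ 3 * |g v| = |v ^ 3 * g v| := by
          rw [abs_mul, abs_of_nonneg (pow_nonneg hv0.le 3)]
        exact add_le_add (add_le_add hB h5.le) hrem


lemma ibp_A (g g' g'' : ℝ → ℝ) (μ : ℝ)
    (hg' : ∀ x : ℝ, 0 ≤ x → HasDerivAt g (g' x) x)
    (hg'' : ∀ x : ℝ, 0 ≤ x → HasDerivAt g' (g'' x) x)
    (hint_v3g'' : IntegrableOn (fun v => v ^ 3 * g'' v) (Ioi (0:ℝ)))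
    (hint_vg : IntegrableOn (fun v => v * g v) (Ioi (0:ℝ)))
    (hdec1 : Tendsto (fun v => v ^ 3 * g' v) atTop (nhds 0))
    (hdec2 : Tendsto (fun v => v ^ 2 * g v) atTop (nhds 0))
    (hmean : ∫ v in Ioi (0:ℝ), v * g v = μ) :
    ∫ v in Ioi (0:ℝ), v ^ 3 * g'' v = 6 * μ := by
  have I1 : ∫ v in Ioi (0:ℝ), (v ^ 3 * g'' v - 6 * (v * g v))
      = 0 - ((0:ℝ) ^ 3 * g' 0 - 3 * ((0:ℝ) ^ 2 * g 0)) := by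
    apply integral_Ioi_of_hasDerivAt_of_tendsto'
      (f := fun v => v ^ 3 * g' v - 3 * (v ^ 2 * g v))
    · intro x hx
      have hx0 : (0:ℝ) ≤ x := hx
      have h1 := (hasDerivAt_pow 3 x).mul (hg'' x hx0)
      have h2 := ((hasDerivAt_pow 2 x).mul (hg' x hx0)).const_mul (3:ℝ)
      have h3 := h1.sub h2
      exact h3.congr_deriv (by push_cast; ring)
    · exact hint_v3g''.sub (hint_vg.const_mul 6)
    · have h4 := hdec1.sub (hdec2.const_mul 3)
      have h5 : (0:ℝ) - 3 * 0 = 0 := by norm_num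
      rwa [h5] at h4
  rw [integral_sub hint_v3g'' (hint_vg.const_mul 6), integral_const_mul, hmean] at I1
  norm_num at I1
  linarith [I1]

lemma ibp_B (g g' : ℝ → ℝ)
    (hg' : ∀ x : ℝ, 0 ≤ x → HasDerivAt g (g' x) x)
    (hint_v3g' : IntegrableOn (fun v => v ^ 3 * g' v) (Ioi (0:ℝ)))
    (hint_v2g : IntegrableOn (fun v => v ^ 2 * g v) (Ioi (0:ℝ)))
    (hdec : Tendsto (fun v => v ^ 3 * g v) atTop (nhds 0)) :
    ∫ v in Ioi (0:ℝ), v ^ 3 * g' v = -3 * ∫ v in Ioi (0:ℝ), v ^ 2 * g v := by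
  have I2 : ∫ v in Ioi (0:ℝ), (v ^ 3 * g' v + 3 * (v ^ 2 * g v))
      = 0 - (0:ℝ) ^ 3 * g 0 := by
    apply integral_Ioi_of_hasDerivAt_of_tendsto' (f := fun v => v ^ 3 * g v)
    · intro x hx
      have h1 := (hasDerivAt_pow 3 x).mul (hg' x hx)
      exact h1.congr_deriv (by push_cast; ring)
    · exact hint_v3g'.add (hint_v2g.const_mul 3)
    · exact hdec
  rw [integral_add hint_v3g' (hint_v2g.const_mul 3), integral_const_mul] at I2
  norm_num at I2
  linarith [I2]


/-- **Evolution of the third moment for the BDY PDE.**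
Let `μ > 0` and let `f` be a classical solution of the BDY PDE
`∂_t f = ∂_vv f + f(0,t) ∂_v f` with Robin boundary condition `∂_v f(0,t) + f(0,t)² = 0`,
which is for every `t` a probability density with mean `μ`, such that
`v³ f(v,t), v³ ∂_v f(v,t), v² f(v,t) → 0` as `v → ∞` and `v ↦ v³ f(v,t)`,
`v ↦ v³ ∂_vv f(v,t)`, `v ↦ v² f(v,t)` are integrable for each `t`, and the third moment
may be differentiated in time under the integral sign. Then
`d/dt ∫₀^∞ v³ f(v,t) dv = 6μ − 3 f(0,t) ∫₀^∞ v² f(v,t) dv` for all `t ≥ 0`. -/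
theorem BDY_PDE_third_moment
    (μ : ℝ) (hμ : 0 < μ)
    (f ft fv fvv : ℝ → ℝ → ℝ)
    (hcont : ContinuousOn (fun p : ℝ × ℝ => f p.1 p.2) (Ici 0 ×ˢ Ici 0))
    (hfv : ∀ v t : ℝ, 0 ≤ v → 0 ≤ t → HasDerivAt (fun w => f w t) (fv v t) v)
    (hfvv : ∀ v t : ℝ, 0 ≤ v → 0 ≤ t → HasDerivAt (fun w => fv w t) (fvv v t) v)
    (hft : ∀ v t : ℝ, 0 ≤ v → 0 ≤ t → HasDerivAt (fun s => f v s) (ft v t) t)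
    (hint : ∀ t : ℝ, 0 ≤ t → IntegrableOn (fun v => f v t) (Ioi 0))
    (hint_fv : ∀ t : ℝ, 0 ≤ t → IntegrableOn (fun v => fv v t) (Ioi 0))
    (hint_fvv : ∀ t : ℝ, 0 ≤ t → IntegrableOn (fun v => fvv v t) (Ioi 0))
    (hint_vf : ∀ t : ℝ, 0 ≤ t → IntegrableOn (fun v => v * f v t) (Ioi 0))
    (hint_v2f : ∀ t : ℝ, 0 ≤ t → IntegrableOn (fun v => v ^ 2 * f v t) (Ioi 0))
    (hint_v3f : ∀ t : ℝ, 0 ≤ t → IntegrableOn (fun v => v ^ 3 * f v t) (Ioi 0))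
    (hint_v3fvv : ∀ t : ℝ, 0 ≤ t → IntegrableOn (fun v => v ^ 3 * fvv v t) (Ioi 0))
    (hmass : ∀ t : ℝ, 0 ≤ t → ∫ v in Ioi (0:ℝ), f v t = 1)
    (hmean : ∀ t : ℝ, 0 ≤ t → ∫ v in Ioi (0:ℝ), v * f v t = μ)
    (hdecay : ∀ t : ℝ, 0 ≤ t → Tendsto (fun v => f v t) atTop (nhds 0))
    (hdecay_fv : ∀ t : ℝ, 0 ≤ t → Tendsto (fun v => fv v t) atTop (nhds 0))
    (hdecay_v3f : ∀ t : ℝ, 0 ≤ t → Tendsto (fun v => v ^ 3 * f v t) atTop (nhds 0))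
    (hdecay_v3fv : ∀ t : ℝ, 0 ≤ t → Tendsto (fun v => v ^ 3 * fv v t) atTop (nhds 0))
    (hdecay_v2f : ∀ t : ℝ, 0 ≤ t → Tendsto (fun v => v ^ 2 * f v t) atTop (nhds 0))
    (hPDE : ∀ v t : ℝ, 0 < v → 0 ≤ t → ft v t = fvv v t + f 0 t * fv v t)
    (hBC : ∀ t : ℝ, 0 ≤ t → fv 0 t + (f 0 t) ^ 2 = 0)
    (hDUI : ∀ t : ℝ, 0 ≤ t →
      HasDerivAt (fun s => ∫ v in Ioi (0:ℝ), v ^ 3 * f v s)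
        (∫ v in Ioi (0:ℝ), v ^ 3 * ft v t) t) :
    ∀ t : ℝ, 0 ≤ t →
      deriv (fun s => ∫ v in Ioi (0:ℝ), v ^ 3 * f v s) t
        = 6 * μ - 3 * f 0 t * ∫ v in Ioi (0:ℝ), v ^ 2 * f v t := by
  intro t ht
  have hkey : IntegrableOn (fun v => v ^ 3 * fv v t) (Ioi (0:ℝ)) :=
    cube_deriv_integrable (fun v => f v t) (fun v => fv v t) (fun v => fvv v t)
      (fun u hu => hfv u t hu ht) (fun u hu => hfvv u t hu ht)
      (hint_fvv t ht) (hint_v3fvv t ht) (hint_v3f t ht) (hint_fv t ht)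
  have hI1 : ∫ v in Ioi (0:ℝ), v ^ 3 * fvv v t = 6 * μ :=
    ibp_A (fun v => f v t) (fun v => fv v t) (fun v => fvv v t) μ
      (fun x hx => hfv x t hx ht) (fun x hx => hfvv x t hx ht)
      (hint_v3fvv t ht) (hint_vf t ht) (hdecay_v3fv t ht) (hdecay_v2f t ht)
      (hmean t ht)
  have hI2 : ∫ v in Ioi (0:ℝ), v ^ 3 * fv v t
      = -3 * ∫ v in Ioi (0:ℝ), v ^ 2 * f v t :=
    ibp_B (fun v => f v t) (fun v => fv v t) (fun x hx => hfv x t hx ht)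
      hkey (hint_v2f t ht) (hdecay_v3f t ht)
  have hI3 : ∫ v in Ioi (0:ℝ), v ^ 3 * ft v t
      = ∫ v in Ioi (0:ℝ), (v ^ 3 * fvv v t + f 0 t * (v ^ 3 * fv v t)) := by
    refine setIntegral_congr_fun measurableSet_Ioi fun v hv => ?_
    rw [hPDE v t hv ht]; ring
  have hI4 : ∫ v in Ioi (0:ℝ), v ^ 3 * ft v t
      = 6 * μ - 3 * f 0 t * ∫ v in Ioi (0:ℝ), v ^ 2 * f v t := by
    rw [hI3, integral_add (hint_v3fvv t ht) (hkey.const_mul (f 0 t)),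
      integral_const_mul, hI1, hI2]
    ring
  rw [(hDUI t ht).deriv, hI4]
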